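/- For every n ≥ 1, the *cosquare Δ_n⁻*Δ_n of the matrix Δ_n is upper triangular with all diagonal entries 1 and all superdiagonal entries 2i, hence is similar to the Jordan block J_n(1). -/

import Mathlib

open Matrix

def JBlock (n : ℕ) (μ : ℂ) : Matrix (Fin n) (Fin n) ℂ :=
  Matrix.of fun i j => if i = j then μ else if (i : ℕ) + 1 = (j : ℕ) then 1 else 0

def MatSimilar {m : Type*} [Fintype m] [DecidableEq m] (A B : Matrix m m ℂ) : Prop :=
  ∃ S : Matrix m m ℂ, IsUnit S ∧ A = S⁻¹ * B * S

/-- The symmetric matrix `Δ_n`: 1's on the antidiagonal `i+j = n-1`, `i` on the entries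
just above it (`i+j = n`, 0-indexed), zeros elsewhere; `Δ_1 = [1]`. -/
def Delta (n : ℕ) : Matrix (Fin n) (Fin n) ℂ :=
  Matrix.of fun i j =>
    if (i : ℕ) + (j : ℕ) = n - 1 then 1
    else if (i : ℕ) + (j : ℕ) = n then Complex.I
    else 0

namespace StarCosquareAux

/-- The strictly upper triangular part of the cosquare. -/
def Nmat (n : ℕ) : Matrix (Fin n) (Fin n) ℂ :=
  Matrix.of fun i j => if (i : ℕ) < (j : ℕ) then 2 * Complex.I ^ ((j : ℕ) - (i : ℕ)) else 0

/-- The candidate cosquare. -/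
def Cmat (n : ℕ) : Matrix (Fin n) (Fin n) ℂ := 1 + Nmat n

lemma Cmat_apply (n : ℕ) (i j : Fin n) :
    Cmat n i j = if (i : ℕ) = (j : ℕ) then 1
      else if (i : ℕ) < (j : ℕ) then 2 * Complex.I ^ ((j : ℕ) - (i : ℕ)) else 0 := by
  simp only [Cmat, Nmat, Matrix.add_apply, Matrix.one_apply, Matrix.of_apply]
  by_cases h : (i : ℕ) = (j : ℕ)
  · have : i = j := Fin.ext h
    simp [this, h]
  · have : i ≠ j := fun e => h (by rw [e])
    simp [this, h]

lemma Npow_zero (n k : ℕ) (i j : Fin n) (h : (j : ℕ) < (i : ℕ) + k) :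
    (Nmat n ^ k) i j = 0 := by
  induction k generalizing j with
  | zero =>
    rw [pow_zero, Matrix.one_apply_ne]
    intro e; rw [e] at h; omega
  | succ k ih =>
    rw [pow_succ, Matrix.mul_apply]
    apply Finset.sum_eq_zero
    intro m _
    by_cases hm : (m : ℕ) < (i : ℕ) + k
    · rw [ih m hm, zero_mul]
    · have : ¬ (m : ℕ) < (j : ℕ) := by omega
      have hz : Nmat n m j = 0 := if_neg this
      rw [hz, mul_zero]

lemma Npow_diag (n k : ℕ) (i j : Fin n) (h : (j : ℕ) = (i : ℕ) + k) :
    (Nmat n ^ k) i j = (2 * Complex.I) ^ k := by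
  induction k generalizing j with
  | zero =>
    have : i = j := Fin.ext (by omega)
    simp [this, pow_zero, Matrix.one_apply]
  | succ k ih =>
    have hj := j.2
    have hm : (i : ℕ) + k < n := by omega
    rw [pow_succ, Matrix.mul_apply]
    rw [Finset.sum_eq_single (⟨(i : ℕ) + k, hm⟩ : Fin n)]
    · rw [ih ⟨(i : ℕ) + k, hm⟩ rfl]
      have h1 : Nmat n ⟨(i : ℕ) + k, hm⟩ j = 2 * Complex.I := by
        have hlt : ((i : ℕ) + k) < (j : ℕ) := by omega
        have hsub : (j : ℕ) - ((i : ℕ) + k) = 1 := by omega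
        simp only [Nmat, Matrix.of_apply, Fin.val_mk]
        rw [if_pos hlt, hsub, pow_one]
      rw [h1, pow_succ]
    · intro b _ hb
      have hbne : (b : ℕ) ≠ (i : ℕ) + k := fun e => hb (Fin.ext e)
      by_cases hlt : (b : ℕ) < (i : ℕ) + k
      · rw [Npow_zero n k i b hlt, zero_mul]
      · have : ¬ (b : ℕ) < (j : ℕ) := by omega
        have hz : Nmat n b j = 0 := if_neg this
        rw [hz, mul_zero]
    · intro hmem; exact absurd (Finset.mem_univ _) hmem

/-- `Δᴴ * C = Δ`. -/
lemma mul_key (n : ℕ) (hn : 1 ≤ n) : (Delta n)ᴴ * Cmat n = Delta n := by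
  ext i j
  have hi := i.2
  have hj := j.2
  rw [Matrix.mul_apply]
  have expand : ∀ k : Fin n, (Delta n)ᴴ i k * Cmat n k j
      = (if (k : ℕ) + (i : ℕ) = n - 1 then Cmat n k j else 0)
        + (if (k : ℕ) + (i : ℕ) = n then -Complex.I * Cmat n k j else 0) := by
    intro k
    rw [Matrix.conjTranspose_apply]
    simp only [Delta, Matrix.of_apply]
    by_cases h1 : (k : ℕ) + (i : ℕ) = n - 1
    · have h2 : ¬ ((k : ℕ) + (i : ℕ) = n) := by omega
      rw [if_pos h1, if_pos h1, if_neg h2, star_one, one_mul, add_zero]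
    · by_cases h2 : (k : ℕ) + (i : ℕ) = n
      · rw [if_neg h1, if_neg h1, if_pos h2, if_pos h2, zero_add,
          Complex.star_def, Complex.conj_I]
      · rw [if_neg h1, if_neg h1, if_neg h2, if_neg h2, star_zero, zero_mul, add_zero]
  rw [Finset.sum_congr rfl (fun k _ => expand k), Finset.sum_add_distrib]
  have hlt1 : n - 1 - (i : ℕ) < n := by omega
  have s1 : ∑ k : Fin n, (if (k : ℕ) + (i : ℕ) = n - 1 then Cmat n k j else 0)
      = Cmat n ⟨n - 1 - (i : ℕ), hlt1⟩ j := by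
    rw [Finset.sum_eq_single (⟨n - 1 - (i : ℕ), hlt1⟩ : Fin n)]
    · rw [if_pos]; show n - 1 - (i : ℕ) + (i : ℕ) = n - 1; omega
    · intro b _ hb
      rw [if_neg]
      intro hc
      exact hb (Fin.ext (by show (b : ℕ) = n - 1 - (i : ℕ); omega))
    · intro hmem; exact absurd (Finset.mem_univ _) hmem
  rw [s1]
  by_cases hi0 : (i : ℕ) = 0
  · have s2 : ∑ k : Fin n, (if (k : ℕ) + (i : ℕ) = n then -Complex.I * Cmat n k j else 0) = 0 := by
      apply Finset.sum_eq_zero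
      intro k _
      rw [if_neg]
      have := k.2; omega
    rw [s2, add_zero]
    simp only [Cmat_apply, Delta, Matrix.of_apply]
    rcases show (j : ℕ) = n - 1 ∨ (j : ℕ) < n - 1 from by omega with h | h
    · rw [if_pos (by omega), if_pos (by omega)]
    · rw [if_neg (by omega), if_neg (by omega), if_neg (by omega), if_neg (by omega)]
  · have hlt2 : n - (i : ℕ) < n := by omega
    have s2 : ∑ k : Fin n, (if (k : ℕ) + (i : ℕ) = n then -Complex.I * Cmat n k j else 0)
        = -Complex.I * Cmat n ⟨n - (i : ℕ), hlt2⟩ j := by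
      rw [Finset.sum_eq_single (⟨n - (i : ℕ), hlt2⟩ : Fin n)]
      · rw [if_pos]; show n - (i : ℕ) + (i : ℕ) = n; omega
      · intro b _ hb
        rw [if_neg]
        intro hc
        exact hb (Fin.ext (by show (b : ℕ) = n - (i : ℕ); omega))
      · intro hmem; exact absurd (Finset.mem_univ _) hmem
    rw [s2]
    simp only [Cmat_apply, Delta, Matrix.of_apply]
    rcases show (j : ℕ) < n - 1 - (i : ℕ) ∨ (j : ℕ) = n - 1 - (i : ℕ)
        ∨ (j : ℕ) = n - (i : ℕ) ∨ n - (i : ℕ) < (j : ℕ) from by omega with h | h | h | h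
    · rw [if_neg (by omega), if_neg (by omega), if_neg (by omega), if_neg (by omega),
        if_neg (by omega), if_neg (by omega)]
      ring
    · rw [if_pos (by omega), if_neg (by omega), if_neg (by omega), if_pos (by omega)]
      ring
    · rw [if_neg (by omega), if_pos (by omega), if_pos (by omega), if_neg (by omega),
        if_pos (by omega)]
      have he : (j : ℕ) - (n - 1 - (i : ℕ)) = 1 := by omega
      rw [he, pow_one]
      ring
    · rw [if_neg (by omega), if_pos (by omega), if_neg (by omega), if_pos (by omega),
        if_neg (by omega), if_neg (by omega)]
      have he : (j : ℕ) - (n - 1 - (i : ℕ)) = ((j : ℕ) - (n - (i : ℕ))) + 1 := by omega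
      rw [he, pow_succ]
      ring

lemma isUnit_det_Delta (n : ℕ) (hn : 1 ≤ n) : IsUnit (Delta n).det := by
  set P : Matrix (Fin n) (Fin n) ℂ :=
    Matrix.of (fun i j => if (i : ℕ) + (j : ℕ) = n - 1 then 1 else 0) with hP
  have hQ : ∀ i j : Fin n, (Delta n * P) i j
      = if i = j then 1 else if (j : ℕ) + 1 = (i : ℕ) then Complex.I else 0 := by
    intro i j
    have hi := i.2
    have hj := j.2
    have hlt : n - 1 - (j : ℕ) < n := by omega
    rw [Matrix.mul_apply, Finset.sum_eq_single (⟨n - 1 - (j : ℕ), hlt⟩ : Fin n)]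
    · have hp : ((⟨n - 1 - (j : ℕ), hlt⟩ : Fin n) : ℕ) + (j : ℕ) = n - 1 := by
        show n - 1 - (j : ℕ) + (j : ℕ) = n - 1; omega
      rw [hP]
      simp only [Matrix.of_apply, hp, if_pos, Delta]
      rw [mul_one]
      by_cases h1 : i = j
      · rw [if_pos h1, if_pos (by rw [h1]; show (j : ℕ) + (n - 1 - (j : ℕ)) = n - 1; omega)]
      · have h1' : (i : ℕ) ≠ (j : ℕ) := fun e => h1 (Fin.ext e)
        rw [if_neg h1, if_neg (by omega)]
        by_cases h2 : (j : ℕ) + 1 = (i : ℕ)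
        · rw [if_pos h2, if_pos (by omega)]
        · rw [if_neg h2, if_neg (by omega)]
    · intro b _ hb
      have : ¬ ((b : ℕ) + (j : ℕ) = n - 1) := by
        intro hc
        exact hb (Fin.ext (by show (b : ℕ) = n - 1 - (j : ℕ); omega))
      rw [hP]
      simp only [Matrix.of_apply, this, if_false, mul_zero]
    · intro hmem; exact absurd (Finset.mem_univ _) hmem
  have htri : (Delta n * P).BlockTriangular OrderDual.toDual := by
    intro i j hij
    rw [hQ i j, if_neg, if_neg]
    · have : (i : ℕ) < (j : ℕ) := hij
      omega
    · intro e; rw [e] at hij; exact lt_irrefl _ hij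
  have hdet : (Delta n * P).det = 1 := by
    rw [Matrix.det_of_lowerTriangular _ htri]
    apply Finset.prod_eq_one
    intro i _
    rw [hQ i i, if_pos rfl]
  rw [Matrix.det_mul] at hdet
  exact IsUnit.of_mul_eq_one _ hdet

lemma cosquare_eq (n : ℕ) (hn : 1 ≤ n) : ((Delta n)ᴴ)⁻¹ * Delta n = Cmat n := by
  have hdet : IsUnit ((Delta n)ᴴ).det := by
    rw [Matrix.det_conjTranspose]
    exact (isUnit_det_Delta n hn).star
  have h := Matrix.nonsing_inv_mul_cancel_left ((Delta n)ᴴ) (Cmat n) hdet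
  rw [mul_key n hn] at h
  exact h

/-- The similarity matrix: columns are `N^(n-1-j) e_{n-1}`. -/
def Smat (n : ℕ) : Matrix (Fin n) (Fin n) ℂ :=
  Matrix.of fun i j => (Nmat n ^ (n - 1 - (j : ℕ))) i ⟨n - 1, Nat.sub_lt i.pos one_pos⟩

lemma Smat_triangular (n : ℕ) : (Smat n).BlockTriangular id := by
  intro i j hij
  have hij' : (j : ℕ) < (i : ℕ) := hij
  have hi := i.2
  exact Npow_zero n _ i _ (by show n - 1 < (i : ℕ) + (n - 1 - (j : ℕ)); omega)

lemma Smat_diag (n : ℕ) (i : Fin n) : Smat n i i = (2 * Complex.I) ^ (n - 1 - (i : ℕ)) := by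
  have hi := i.2
  exact Npow_diag n _ i _ (by show n - 1 = (i : ℕ) + (n - 1 - (i : ℕ)); omega)

lemma isUnit_det_Smat (n : ℕ) : IsUnit (Smat n).det := by
  rw [Matrix.det_of_upperTriangular (Smat_triangular n), isUnit_iff_ne_zero]
  apply Finset.prod_ne_zero_iff.mpr
  intro i _
  rw [Smat_diag]
  exact pow_ne_zero _ (mul_ne_zero two_ne_zero Complex.I_ne_zero)

lemma key_sim (n : ℕ) (hn : 1 ≤ n) : Cmat n * Smat n = Smat n * JBlock n 1 := by
  ext i j
  have hi := i.2
  have hj := j.2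
  have hlast : n - 1 < n := by omega
  have hNS : (Nmat n * Smat n) i j = (Nmat n ^ (n - 1 - (j : ℕ) + 1)) i ⟨n - 1, hlast⟩ := by
    rw [pow_succ', Matrix.mul_apply, Matrix.mul_apply]
    rfl
  have hL : (Cmat n * Smat n) i j = Smat n i j + (Nmat n ^ (n - 1 - (j : ℕ) + 1)) i ⟨n - 1, hlast⟩ := by
    rw [Cmat, add_mul, one_mul, Matrix.add_apply, hNS]
  rw [hL]
  have expand : ∀ k : Fin n, Smat n i k * JBlock n 1 k j
      = (if k = j then Smat n i k else 0) + (if (k : ℕ) + 1 = (j : ℕ) then Smat n i k else 0) := by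
    intro k
    simp only [JBlock, Matrix.of_apply]
    by_cases h1 : k = j
    · have : ¬ ((k : ℕ) + 1 = (j : ℕ)) := by rw [h1]; omega
      simp [h1, this]
    · by_cases h2 : (k : ℕ) + 1 = (j : ℕ)
      · simp [h1, h2]
      · simp [h1, h2]
  rw [Matrix.mul_apply, Finset.sum_congr rfl (fun k _ => expand k), Finset.sum_add_distrib]
  have s1 : ∑ k : Fin n, (if k = j then Smat n i k else 0) = Smat n i j := by
    simp
  rw [s1]
  congr 1
  by_cases hj0 : (j : ℕ) = 0
  · have s2 : ∑ k : Fin n, (if (k : ℕ) + 1 = (j : ℕ) then Smat n i k else 0) = 0 := by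
      apply Finset.sum_eq_zero
      intro k _
      rw [if_neg (by omega)]
    rw [s2]
    have : n - 1 - (j : ℕ) + 1 = n := by omega
    rw [this]
    exact Npow_zero n n i _ (by show n - 1 < (i : ℕ) + n; omega)
  · have hlt : (j : ℕ) - 1 < n := by omega
    have s2 : ∑ k : Fin n, (if (k : ℕ) + 1 = (j : ℕ) then Smat n i k else 0)
        = Smat n i ⟨(j : ℕ) - 1, hlt⟩ := by
      rw [Finset.sum_eq_single (⟨(j : ℕ) - 1, hlt⟩ : Fin n)]
      · rw [if_pos]; show (j : ℕ) - 1 + 1 = (j : ℕ); omega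
      · intro b _ hb
        rw [if_neg]
        intro hc
        exact hb (Fin.ext (by show (b : ℕ) = (j : ℕ) - 1; omega))
      · intro hmem; exact absurd (Finset.mem_univ _) hmem
    rw [s2]
    show (Nmat n ^ (n - 1 - (j : ℕ) + 1)) i ⟨n - 1, hlast⟩
      = (Nmat n ^ (n - 1 - ((j : ℕ) - 1))) i _
    have he : n - 1 - ((j : ℕ) - 1) = n - 1 - (j : ℕ) + 1 := by omega
    rw [he]

end StarCosquareAux

open StarCosquareAux in
/-- The *cosquare `Δ_n⁻* Δ_n` is upper triangular with all diagonal entries `1` and all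
superdiagonal entries `2i`, hence similar to the Jordan block `J_n(1)`. -/
theorem starCosquare_Delta (n : ℕ) (hn : 1 ≤ n) :
    (∀ i j : Fin n, (j : ℕ) < (i : ℕ) → (((Delta n)ᴴ)⁻¹ * Delta n) i j = 0) ∧
    (∀ i : Fin n, (((Delta n)ᴴ)⁻¹ * Delta n) i i = 1) ∧
    (∀ i j : Fin n, (i : ℕ) + 1 = (j : ℕ) →
      (((Delta n)ᴴ)⁻¹ * Delta n) i j = 2 * Complex.I) ∧
    MatSimilar (((Delta n)ᴴ)⁻¹ * Delta n) (JBlock n 1) := by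
  have hC := cosquare_eq n hn
  refine ⟨?_, ?_, ?_, ?_⟩
  · intro i j hij
    rw [hC, Cmat_apply, if_neg (by omega), if_neg (by omega)]
  · intro i
    rw [hC, Cmat_apply, if_pos rfl]
  · intro i j hij
    rw [hC, Cmat_apply, if_neg (by omega), if_pos (by omega),
      show (j : ℕ) - (i : ℕ) = 1 from by omega, pow_one]
  · rw [hC]
    have hdetS := isUnit_det_Smat n
    refine ⟨(Smat n)⁻¹, ?_, ?_⟩
    · rw [Matrix.isUnit_iff_isUnit_det, Matrix.det_nonsing_inv]
      exact hdetS.ringInverse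
    · rw [Matrix.nonsing_inv_nonsing_inv _ hdetS]
      have := congrArg (fun M => M * (Smat n)⁻¹) (key_sim n hn)
      rwa [Matrix.mul_nonsing_inv_cancel_right _ _ hdetS] at this
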